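/- arXiv:2206.07116 — 6 statements merged into one kernel-verified Lean document; each statement's English description precedes it below -/
import Mathlib

section
/- Let Γ be a finite strongly connected digraph of uniform outdegree, d the gcd of lengths of all its cycles, and fix any deterministic coloring. If the length of some path from vertex p to vertex q is not congruent to 0 modulo d, then for every word s over the colors, ps ≠ qs. -/
def Adj {V : Type*} (E : V → Multiset V) (p q : V) : Prop := q ∈ E p

def StronglyConnected {V : Type*} (E : V → Multiset V) : Prop :=
  ∀ p q : V, Relation.ReflTransGen (Adj E) p q

def HasCycle {V : Type*} (E : V → Multiset V) (n : ℕ) : Prop :=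
  0 < n ∧ ∃ c : ZMod n → V, ∀ i, c (i + 1) ∈ E (c i)

def CycleGcd {V : Type*} (E : V → Multiset V) (k : ℕ) : Prop :=
  (∀ n, HasCycle E n → k ∣ n) ∧ ∀ m, (∀ n, HasCycle E n → m ∣ n) → m ∣ k

def IsColoring {V : Type*} {d : ℕ} (E : V → Multiset V) (δ : V → Fin d → V) : Prop :=
  ∀ v, (List.ofFn (δ v) : Multiset V) = E v

def run {V A : Type*} (δ : V → A → V) (p : V) (s : List A) : V :=
  s.foldl δ p

def wordImage {V A : Type*} [Fintype V] [DecidableEq V] (δ : V → A → V) (s : List A) : Finset V :=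
  Finset.univ.image (fun p => run δ p s)

def IsPathLen {V : Type*} (E : V → Multiset V) (p q : V) (n : ℕ) : Prop :=
  ∃ c : Fin (n + 1) → V, c 0 = p ∧ c (Fin.last n) = q ∧
    ∀ i : Fin n, c i.succ ∈ E (c i.castSucc)

def SyncPair {V A : Type*} (δ : V → A → V) (p q : V) : Prop :=
  ∃ s : List A, run δ p s = run δ q s

def StablePair {V A : Type*} (δ : V → A → V) (p q : V) : Prop :=
  ∀ u : List A, SyncPair δ (run δ p u) (run δ q u)

def DeadlockPair {V A : Type*} (δ : V → A → V) (p q : V) : Prop :=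
  ∀ s : List A, run δ p s ≠ run δ q s

def IsFClique {V A : Type*} [Fintype V] [DecidableEq V] (δ : V → A → V) (F : Finset V) : Prop :=
  (∀ p ∈ F, ∀ q ∈ F, p ≠ q → DeadlockPair δ p q) ∧
  ∀ G : Finset V, (∀ p ∈ G, ∀ q ∈ G, p ≠ q → DeadlockPair δ p q) → G.card ≤ F.card

noncomputable def levelOf {V : Type*} (f : V → V) (v : V) : ℕ :=
  sInf {n | ∃ m, 0 < m ∧ f^[m] (f^[n] v) = f^[n] v}

noncomputable def rootOf {V : Type*} (f : V → V) (v : V) : V := f^[levelOf f v] v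

noncomputable def maxLevel {V : Type*} [Fintype V] (f : V → V) : ℕ :=
  Finset.univ.sup (levelOf f)

def UniqueMaxTree {V : Type*} [Fintype V] (f : V → V) : Prop :=
  0 < maxLevel f ∧ ∃ r : V, ∀ v : V, levelOf f v = maxLevel f → rootOf f v = r

def HasCycleIn {V : Type*} (E : V → Multiset V) (S : Finset V) (n : ℕ) : Prop :=
  0 < n ∧ ∃ c : ZMod n → V, (∀ i, c i ∈ S) ∧ ∀ i, c (i + 1) ∈ E (c i)

def CycleGcdIn {V : Type*} (E : V → Multiset V) (S : Finset V) (k : ℕ) : Prop :=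
  (∀ n, HasCycleIn E S n → k ∣ n) ∧ ∀ m, (∀ n, HasCycleIn E S n → m ∣ n) → m ∣ k


section Aux

variable {V : Type*}

inductive Walk (E : V → Multiset V) : V → V → ℕ → Prop
  | refl (p : V) : Walk E p p 0
  | tail {p q r : V} {n : ℕ} : Walk E p q n → Adj E q r → Walk E p r (n + 1)

lemma walk_trans {E : V → Multiset V} {a b c : V} {m n : ℕ}
    (h1 : Walk E a b m) (h2 : Walk E b c n) : Walk E a c (m + n) := by
  induction h2 with
  | refl => exact h1
  | tail h e ih => exact ih.tail e

lemma reflTransGen_walk {E : V → Multiset V} {a b : V}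
    (h : Relation.ReflTransGen (Adj E) a b) : ∃ m, Walk E a b m := by
  induction h with
  | refl => exact ⟨0, Walk.refl a⟩
  | tail _ e ih => obtain ⟨m, w⟩ := ih; exact ⟨m + 1, w.tail e⟩

lemma pathLen_to_walk {E : V → Multiset V} :
    ∀ {n : ℕ} {a b : V}, IsPathLen E a b n → Walk E a b n := by
  intro n
  induction n with
  | zero =>
    rintro a b ⟨c, h0, hl, -⟩
    have : a = b := by rw [← h0, ← hl]; rfl
    exact this ▸ Walk.refl a
  | succ n ih =>
    rintro a b ⟨c, h0, hl, he⟩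
    have w : Walk E a (c (Fin.last n).castSucc) n := by
      apply ih
      refine ⟨fun i => c i.castSucc, ?_, rfl, ?_⟩
      · simpa using h0
      · intro i
        have := he i.castSucc
        have h1 : (i.castSucc : Fin (n+1)).succ = (i.succ).castSucc := by
          ext; simp
        have h2 : ((i.castSucc : Fin (n+1)).castSucc : Fin (n+2)) = (i.castSucc).castSucc := rfl
        rw [h1] at this
        exact this
    have e : Adj E (c (Fin.last n).castSucc) b := by
      have := he (Fin.last n)
      rwa [show (Fin.last n).succ = Fin.last (n+1) from rfl, hl] at this
    exact w.tail e

lemma walk_to_pathLen {E : V → Multiset V} {a b : V} {n : ℕ}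
    (h : Walk E a b n) : IsPathLen E a b n := by
  induction h with
  | refl => exact ⟨fun _ => _, rfl, rfl, fun i => i.elim0⟩
  | @tail q r n _ e ih =>
    obtain ⟨c, h0, hl, he⟩ := ih
    refine ⟨Fin.snoc c r, ?_, ?_, ?_⟩
    · rw [show (0 : Fin (n+2)) = (0 : Fin (n+1)).castSucc by ext; simp, Fin.snoc_castSucc]
      exact h0
    · simp
    · intro i
      induction i using Fin.lastCases with
      | last =>
        rw [show (Fin.last n).succ = Fin.last (n+1) from rfl, Fin.snoc_last]
        rw [show ((Fin.last n).castSucc : Fin (n+2)) = (Fin.last n).castSucc from rfl,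
          Fin.snoc_castSucc, hl]
        exact e
      | cast j =>
        have h1 : (j.castSucc : Fin (n+1)).succ = (j.succ).castSucc := by ext; simp
        rw [h1]
        simp only [Fin.snoc_castSucc]; exact he j

lemma walk_closed_dvd {E : V → Multiset V} {d : ℕ} (hgcd : CycleGcd E d)
    {a : V} {m : ℕ} (h : Walk E a a m) (hm : 0 < m) : d ∣ m := by
  apply hgcd.1
  obtain ⟨c, h0, hl, he⟩ := walk_to_pathLen h
  haveI : NeZero m := ⟨hm.ne'⟩
  refine ⟨hm, fun i => c ⟨i.val, Nat.lt_succ_of_lt (ZMod.val_lt i)⟩, ?_⟩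
  intro i
  have hiv : i.val < m := ZMod.val_lt i
  have key : c ⟨(i + 1).val, Nat.lt_succ_of_lt (ZMod.val_lt (i+1))⟩ = c ⟨i.val + 1, by omega⟩ := by
    have hv : (i + 1).val = (i.val + 1) % m := by
      rw [ZMod.val_add, ZMod.val_one_eq_one_mod, Nat.add_mod i.val 1 m,
        Nat.mod_eq_of_lt hiv]
    rcases Nat.lt_or_ge (i.val + 1) m with h2 | h2
    · congr 1
      ext
      simp [hv, Nat.mod_eq_of_lt h2]
    · have hm2 : i.val + 1 = m := by omega
      have : (i + 1).val = 0 := by rw [hv, hm2]; simp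
      have e1 : c ⟨(i + 1).val, Nat.lt_succ_of_lt (ZMod.val_lt (i+1))⟩ = c 0 := by
        congr 1; ext; simp [this]
      rw [e1, h0]
      conv_lhs => rw [show a = c (Fin.last m) from hl.symm]
      congr 1; ext; simp [hm2, Fin.last]
  show c ⟨(i + 1).val, Nat.lt_succ_of_lt (ZMod.val_lt (i+1))⟩ ∈
    E (c ⟨i.val, Nat.lt_succ_of_lt (ZMod.val_lt i)⟩)
  rw [key]
  exact he ⟨i.val, hiv⟩

end Aux

/-- if some path from p to q has length not divisible by d (the gcd of
cycle lengths), then for every word s over the colors, ps ≠ qs. -/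
theorem stmt2 {V : Type*} [Fintype V] {d dcol : ℕ}
    (E : V → Multiset V)
    (hsc : StronglyConnected E)
    (hgcd : CycleGcd E d)
    (δ : V → Fin dcol → V) (hδ : IsColoring E δ)
    (p q : V) (n : ℕ)
    (hpath : IsPathLen E p q n) (hn : ¬ d ∣ n) :
    ∀ s : List (Fin dcol), run δ p s ≠ run δ q s := by
  classical
  -- every vertex has a walk from p
  have hW : ∀ v : V, ∃ m, Walk E p v m := fun v => reflTransGen_walk (hsc p v)
  -- well-definedness of walk lengths mod d
  have hwd : ∀ (v : V) (a b : ℕ), Walk E p v a → Walk E p v b →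
      (a : ZMod d) = (b : ZMod d) := by
    intro v a b wa wb
    obtain ⟨cc, wc⟩ := reflTransGen_walk (hsc v p)
    have w1 : Walk E p p (a + cc) := walk_trans wa wc
    have w2 : Walk E p p (b + cc) := walk_trans wb wc
    rcases Nat.eq_zero_or_pos (a + cc) with h1 | h1
    · have ha : a = 0 := by omega
      have hc : cc = 0 := by omega
      rcases Nat.eq_zero_or_pos b with hb | hb
      · rw [ha, hb]
      · have : d ∣ b + cc := walk_closed_dvd hgcd w2 (by omega)
        rw [hc] at this
        have hb0 : (b : ZMod d) = 0 := (CharP.cast_eq_zero_iff (ZMod d) d b).mpr (by simpa using this)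
        rw [ha, hb0]; simp
    · rcases Nat.eq_zero_or_pos (b + cc) with h2 | h2
      · have hb : b = 0 := by omega
        have hc : cc = 0 := by omega
        have : d ∣ a + cc := walk_closed_dvd hgcd w1 h1
        rw [hc] at this
        have ha0 : (a : ZMod d) = 0 := (CharP.cast_eq_zero_iff (ZMod d) d a).mpr (by simpa using this)
        rw [hb, ha0]; simp
      · have d1 : d ∣ a + cc := walk_closed_dvd hgcd w1 h1
        have d2 : d ∣ b + cc := walk_closed_dvd hgcd w2 h2
        have e1 : ((a : ZMod d) + cc) = 0 := by
          have := (CharP.cast_eq_zero_iff (ZMod d) d (a + cc)).mpr d1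
          push_cast at this; exact this
        have e2 : ((b : ZMod d) + cc) = 0 := by
          have := (CharP.cast_eq_zero_iff (ZMod d) d (b + cc)).mpr d2
          push_cast at this; exact this
        have : ((a : ZMod d) + cc) = ((b : ZMod d) + cc) := by rw [e1, e2]
        exact add_right_cancel this
  -- the level function
  set lev : V → ZMod d := fun v => (((hW v).choose : ℕ) : ZMod d) with hlev
  have hlev_spec : ∀ v a, Walk E p v a → lev v = (a : ZMod d) := by
    intro v a wa
    exact hwd v (hW v).choose a (hW v).choose_spec wa
  -- edges increase lev by 1
  have hedge : ∀ u w : V, Adj E u w → lev w = lev u + 1 := by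
    intro u w e
    have wu := (hW u).choose_spec
    have : Walk E p w ((hW u).choose + 1) := wu.tail e
    rw [hlev_spec w _ this]
    push_cast
    rfl
  -- δ steps are edges
  have hstep : ∀ (u : V) (a : Fin dcol), Adj E u (δ u a) := by
    intro u a
    unfold Adj
    rw [← hδ u]
    exact Multiset.mem_coe.mpr (List.mem_ofFn.mpr ⟨a, rfl⟩)
  -- run shifts lev by word length
  have hrun : ∀ (s : List (Fin dcol)) (u : V),
      lev (run δ u s) = lev u + (s.length : ZMod d) := by
    intro s
    induction s with
    | nil => intro u; simp [run]
    | cons a t ih =>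
      intro u
      have : run δ u (a :: t) = run δ (δ u a) t := rfl
      rw [this, ih (δ u a), hedge u (δ u a) (hstep u a)]
      push_cast [List.length_cons]
      ring
  -- lev q = lev p + n
  have hq : lev q = lev p + (n : ZMod d) := by
    have wn : Walk E p q n := pathLen_to_walk hpath
    have wp : Walk E p p 0 := Walk.refl p
    rw [hlev_spec q n wn, hlev_spec p 0 wp]
    simp
  intro s hs
  have h1 := hrun s p
  have h2 := hrun s q
  rw [hs] at h1
  rw [hq] at h2
  have h3 : lev p + (s.length : ZMod d) = lev p + (n : ZMod d) + (s.length : ZMod d) := by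
    rw [← h1, h2]
  have h4 : lev p = lev p + (n : ZMod d) := add_right_cancel h3
  have hn0 : (n : ZMod d) = 0 := left_eq_add.mp h4
  exact hn ((CharP.cast_eq_zero_iff (ZMod d) d n).mp hn0)
end

section
/- Let A be a deterministic finite automaton with strongly connected transition graph, and let F be an F-clique (a maximum-size set of states in which every pair of distinct states is a deadlock). Then for every word s, the set Fs is also an F-clique (in particular |Fs| = |F|). -/
/-- the image of an F-clique under any word is again an F-clique,
of the same cardinality. -/
theorem stmt4 {V A : Type*} [Fintype V] [DecidableEq V]
    (δ : V → A → V)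
    (hsc : ∀ p q : V, ∃ s : List A, run δ p s = q)
    (F : Finset V) (hF : IsFClique δ F) (s : List A) :
    IsFClique δ (F.image (fun p => run δ p s)) ∧
    (F.image (fun p => run δ p s)).card = F.card := by
  have happ : ∀ (p : V) (t : List A), run δ p (s ++ t) = run δ (run δ p s) t := by
    intro p t; simp [run, List.foldl_append]
  have hinj : ∀ p ∈ F, ∀ q ∈ F, run δ p s = run δ q s → p = q := by
    intro p hp q hq h
    by_contra hne
    exact hF.1 p hp q hq hne s h
  have hcard : (F.image (fun p => run δ p s)).card = F.card :=
    Finset.card_image_of_injOn hinj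
  refine ⟨⟨?_, ?_⟩, hcard⟩
  · intro p' hp' q' hq' hne t ht
    obtain ⟨p, hp, rfl⟩ := Finset.mem_image.mp hp'
    obtain ⟨q, hq, rfl⟩ := Finset.mem_image.mp hq'
    have hpq : p ≠ q := fun h => hne (by rw [h])
    exact hF.1 p hp q hq hpq (s ++ t) (by rw [happ, happ, ht])
  · intro G hG
    rw [hcard]
    exact hF.2 G hG
end

section
/- Let A be a deterministic finite automaton with strongly connected transition graph. Then every state p belongs to some F-clique. -/
/-- in a DFA with strongly connected transition graph, every state
belongs to some F-clique. -/
theorem stmt5 {V A : Type*} [Fintype V] [DecidableEq V]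
    (δ : V → A → V)
    (hsc : ∀ p q : V, ∃ s : List A, run δ p s = q)
    (p : V) :
    ∃ F : Finset V, IsFClique δ F ∧ p ∈ F := by
  classical
  have hrun : ∀ (q : V) (s t : List A), run δ q (s ++ t) = run δ (run δ q s) t := by
    intro q s t; simp [run, List.foldl_append]
  set P : Finset V → Prop := fun G => ∀ a ∈ G, ∀ b ∈ G, a ≠ b → DeadlockPair δ a b with hP
  obtain ⟨G, hGmem, hGmax⟩ :=
    (Finset.univ.filter fun G => P G).exists_max_image Finset.card
      ⟨{p}, by simp [P]⟩
  rw [Finset.mem_filter] at hGmem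
  have hG : P G := hGmem.2
  have hGne : G.Nonempty := by
    by_contra h
    have h1 : ({p} : Finset V).card ≤ G.card := by
      apply hGmax; simp [P]
    simp [Finset.not_nonempty_iff_eq_empty.mp h] at h1
  obtain ⟨q, hq⟩ := hGne
  obtain ⟨s, hs⟩ := hsc q p
  refine ⟨G.image (fun v => run δ v s), ⟨?_, ?_⟩, ?_⟩
  · intro a' ha' b' hb' hne t
    obtain ⟨a, ha, rfl⟩ := Finset.mem_image.mp ha'
    obtain ⟨b, hb, rfl⟩ := Finset.mem_image.mp hb'
    have hab : a ≠ b := by rintro rfl; exact hne rfl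
    have := hG a ha b hb hab (s ++ t)
    rwa [hrun, hrun] at this
  · intro G' hG'
    have hcard : (G.image (fun v => run δ v s)).card = G.card := by
      apply Finset.card_image_of_injOn
      intro a ha b hb hab
      by_contra hne
      exact hG a ha b hb hne s hab
    rw [hcard]
    apply hGmax
    simp only [Finset.mem_filter, Finset.mem_univ, true_and]
    exact hG'
  · exact Finset.mem_image.mpr ⟨q, hq, hs⟩
end

section
/- Let A be a deterministic finite automaton obtained from a coloring with no stable pairs of a finite strongly connected k-periodic digraph, and let A and B be two distinct F-cliques with |A| > 1. Then |A \ (A∩B)| = |B \ (A∩B)| > 1, i.e., A and B differ in more than one element. -/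
lemma run_append' {V A : Type*} (δ : V → A → V) (p : V) (u s : List A) :
    run δ p (u ++ s) = run δ (run δ p u) s := List.foldl_append ..

lemma dl_run {V A : Type*} {δ : V → A → V} {p q : V} (h : DeadlockPair δ p q)
    (u : List A) : DeadlockPair δ (run δ p u) (run δ q u) := fun s => by
  rw [← run_append', ← run_append']; exact h _

lemma dl_symm {V A : Type*} {δ : V → A → V} {p q : V} (h : DeadlockPair δ p q) :
    DeadlockPair δ q p := fun s hs => h s hs.symm

/-- in a coloring without stable pairs of a k-periodic graph, two
distinct F-cliques A, B with |A| > 1 differ in more than one element. -/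
theorem stmt6 {V : Type*} [Fintype V] [DecidableEq V] [Nonempty V] {d k : ℕ}
    (E : V → Multiset V)
    (hsc : StronglyConnected E)
    (hgcd : CycleGcd E k)
    (δ : V → Fin d → V) (hδ : IsColoring E δ)
    (hnostable : ∀ p q : V, p ≠ q → ¬ StablePair δ p q)
    (A B : Finset V) (hA : IsFClique δ A) (hB : IsFClique δ B)
    (hAB : A ≠ B) (hcard : 1 < A.card) :
    (A \ (A ∩ B)).card = (B \ (A ∩ B)).card ∧ 1 < (A \ (A ∩ B)).card := by
  obtain ⟨hAcl, hAmax⟩ := hA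
  obtain ⟨hBcl, hBmax⟩ := hB
  have hcardAB : A.card = B.card := le_antisymm (hBmax A hAcl) (hAmax B hBcl)
  have h1 : A \ (A ∩ B) = A \ B := by ext x; simp [Finset.mem_sdiff]
  have h2 : B \ (A ∩ B) = B \ A := by ext x; simp [Finset.mem_sdiff]
  have e1 := Finset.card_sdiff_add_card_inter A B
  have e2 := Finset.card_sdiff_add_card_inter B A
  rw [Finset.inter_comm B A] at e2
  have hcardeq : (A \ B).card = (B \ A).card := by omega
  rw [h1, h2, hcardeq]
  refine ⟨rfl, ?_⟩
  by_contra hle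
  push_neg at hle
  have hne0 : (A \ B).card ≠ 0 := by
    intro h0
    apply hAB
    have hsub : A ⊆ B := by
      intro x hx
      by_contra hxB
      have : x ∈ A \ B := Finset.mem_sdiff.mpr ⟨hx, hxB⟩
      simpa [Finset.card_eq_zero.mp h0] using this
    exact Finset.eq_of_subset_of_card_le hsub (le_of_eq hcardAB.symm)
  have hc1 : (A \ B).card = 1 := by omega
  obtain ⟨a, ha⟩ := Finset.card_eq_one.mp hc1
  obtain ⟨b, hb⟩ := Finset.card_eq_one.mp (hcardeq ▸ hc1)
  have haA : a ∈ A ∧ a ∉ B := Finset.mem_sdiff.mp (ha ▸ Finset.mem_singleton_self a)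
  have hbB : b ∈ B ∧ b ∉ A := Finset.mem_sdiff.mp (hb ▸ Finset.mem_singleton_self b)
  have hab : a ≠ b := fun h => hbB.2 (h ▸ haA.1)
  apply hnostable a b hab
  intro u
  by_contra hsync
  have hdl : DeadlockPair δ (run δ a u) (run δ b u) := by
    intro s hs; exact hsync ⟨s, hs⟩
  set G : Finset V := A.image (fun p => run δ p u) ∪ {run δ b u} with hG
  -- every x in A other than a is in B
  have hmem : ∀ x ∈ A, x ≠ a → x ∈ B := by
    intro x hx hxa
    by_contra hxB
    have : x ∈ A \ B := Finset.mem_sdiff.mpr ⟨hx, hxB⟩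
    rw [ha, Finset.mem_singleton] at this
    exact hxa this
  -- injectivity of run on A
  have hinj : ∀ x ∈ A, ∀ y ∈ A, run δ x u = run δ y u → x = y := by
    intro x hx y hy hxy
    by_contra hne
    exact hAcl x hx y hy hne u hxy
  have hbnot : run δ b u ∉ A.image (fun p => run δ p u) := by
    intro hmem'
    obtain ⟨x, hx, hxe⟩ := Finset.mem_image.mp hmem'
    by_cases hxa : x = a
    · subst hxa; exact hdl [] hxe
    · have hxB := hmem x hx hxa
      have : x ≠ b := fun h => hbB.2 (h ▸ hx)
      exact hBcl x hxB b hbB.1 this u hxe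
  have hGcard : G.card = A.card + 1 := by
    rw [hG, Finset.union_comm, ← Finset.insert_eq,
      Finset.card_insert_of_notMem hbnot, Finset.card_image_of_injOn hinj]
  have hGcl : ∀ p ∈ G, ∀ q ∈ G, p ≠ q → DeadlockPair δ p q := by
    intro p hp q hq hpq
    rw [hG, Finset.mem_union, Finset.mem_singleton] at hp hq
    have key : ∀ x ∈ A, DeadlockPair δ (run δ x u) (run δ b u) := by
      intro x hx
      by_cases hxa : x = a
      · exact hxa ▸ hdl
      · have : x ≠ b := fun h => hbB.2 (h ▸ hx)
        exact dl_run (hBcl x (hmem x hx hxa) b hbB.1 this) u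
    rcases hp with hp | hp <;> rcases hq with hq | hq
    · obtain ⟨x, hx, hxe⟩ := Finset.mem_image.mp hp
      obtain ⟨y, hy, hye⟩ := Finset.mem_image.mp hq
      have hxy : x ≠ y := fun h => hpq (hxe ▸ hye ▸ h ▸ rfl)
      exact hxe ▸ hye ▸ dl_run (hAcl x hx y hy hxy) u
    · obtain ⟨x, hx, hxe⟩ := Finset.mem_image.mp hp
      exact hxe ▸ hq ▸ key x hx
    · obtain ⟨y, hy, hye⟩ := Finset.mem_image.mp hq
      exact hp ▸ hye ▸ dl_symm (key y hy)
    · exact absurd (hp.trans hq.symm) hpq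
  have := hAmax G hGcl
  omega
end

section
/- Let S be a spanning 1-outregular subgraph (every vertex has exactly one outgoing edge in S) of a finite digraph Γ, colored with a single color α along with any deterministic extension. Let N be the set of vertices of level n in some tree of S. Then for every F-clique F of the resulting automaton, |F ∩ N| ≤ 1. -/

lemma run_replicate {V : Type*} {d : ℕ} (δ : V → Fin d → V) (α : Fin d) (f : V → V)
    (hf : ∀ v, δ v α = f v) (n : ℕ) (v : V) :
    run δ v (List.replicate n α) = f^[n] v := by
  induction n generalizing v with
  | zero => rfl
  | succ k ih =>
    rw [List.replicate_succ]
    show run δ (δ v α) (List.replicate k α) = f^[k+1] v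
    rw [ih, hf, Function.iterate_succ_apply]

/-- an F-clique meets the set of vertices of a given level in a given
tree of a 1-outregular spanning subgraph (colored by α) in at most one vertex. -/
theorem stmt8 {V : Type*} [Fintype V] [DecidableEq V] {d : ℕ}
    (E : V → Multiset V)
    (δ : V → Fin d → V) (hδ : IsColoring E δ)
    (α : Fin d) (f : V → V) (hf : ∀ v, δ v α = f v)
    (n : ℕ) (r : V)
    (F : Finset V) (hF : IsFClique δ F) :
    (F ∩ (Finset.univ.filter (fun v => levelOf f v = n ∧ rootOf f v = r))).card ≤ 1 := by
  apply Finset.card_le_one.mpr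
  intro p hp q hq
  by_contra hne
  simp only [Finset.mem_inter, Finset.mem_filter] at hp hq
  have hd := hF.1 p hp.1 q hq.1 hne (List.replicate n α)
  apply hd
  rw [run_replicate δ α f hf, run_replicate δ α f hf]
  have hp2 : f^[n] p = r := by
    have := hp.2.2.2; rw [rootOf, hp.2.2.1] at this; exact this
  have hq2 : f^[n] q = r := by
    have := hq.2.2.2; rw [rootOf, hq.2.2.1] at this; exact this
  rw [hp2, hq2]
end

section
/- Let Γ be a d-periodic finite strongly connected digraph that has a 1-outregular spanning subgraph R consisting solely of disjoint cycles (no trees). Then either Γ is a cycle of length d of bunches, or Γ has another 1-outregular spanning subgraph with exactly one maximal tree. -/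
section AuxL
variable {V : Type*} [Fintype V]

def Cyclic {V : Type*} (g : V → V) (x : V) : Prop := ∃ m, 0 < m ∧ g^[m] x = x

lemma levelSet_nonempty (g : V → V) (v : V) :
    {n | ∃ m, 0 < m ∧ g^[m] (g^[n] v) = g^[n] v}.Nonempty := by
  obtain ⟨a, b, hab, h⟩ := Finite.exists_ne_map_eq_of_infinite (fun k : ℕ => g^[k] v)
  rcases lt_or_gt_of_ne hab with hlt | hlt
  · exact ⟨a, b - a, by omega, by
      rw [← Function.iterate_add_apply, Nat.sub_add_cancel hlt.le]; exact h.symm⟩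
  · exact ⟨b, a - b, by omega, by
      rw [← Function.iterate_add_apply, Nat.sub_add_cancel hlt.le]; exact h⟩

lemma level_mem (g : V → V) (v : V) :
    levelOf g v ∈ {n | ∃ m, 0 < m ∧ g^[m] (g^[n] v) = g^[n] v} :=
  Nat.sInf_mem (levelSet_nonempty g v)

lemma level_eq_zero_iff (g : V → V) (v : V) : levelOf g v = 0 ↔ Cyclic g v := by
  constructor
  · intro h
    have := level_mem g v
    rw [h] at this
    simpa [Cyclic] using this
  · intro h
    apply Nat.sInf_eq_zero.mpr
    left
    simpa [Cyclic] using h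

omit [Fintype V] in
lemma cyclic_apply {g : V → V} {x : V} (h : Cyclic g x) : Cyclic g (g x) := by
  obtain ⟨m, hm, h⟩ := h
  exact ⟨m, hm, by rw [← Function.iterate_succ_apply, Function.iterate_succ_apply', h]⟩

lemma level_succ {g : V → V} {x : V} (h : ¬ Cyclic g x) :
    levelOf g x = levelOf g (g x) + 1 := by
  have h1 : levelOf g (g x) ≤ levelOf g x - 1 := by
    apply Nat.sInf_le
    have hx := level_mem g x
    have hx0 : levelOf g x ≠ 0 := fun h0 => h ((level_eq_zero_iff g x).mp h0)
    obtain ⟨m, hm, hfix⟩ := hx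
    refine ⟨m, hm, ?_⟩
    rw [← Function.iterate_succ_apply g (levelOf g x - 1) x]
    rw [Nat.succ_eq_add_one, Nat.sub_add_cancel (Nat.one_le_iff_ne_zero.mpr hx0)]
    exact hfix
  have h2 : levelOf g x ≤ levelOf g (g x) + 1 := by
    apply Nat.sInf_le
    have hgx := level_mem g (g x)
    obtain ⟨m, hm, hfix⟩ := hgx
    refine ⟨m, hm, ?_⟩
    rw [Function.iterate_succ_apply g (levelOf g (g x)) x]
    exact hfix
  have hx0 : levelOf g x ≠ 0 := fun h0 => h ((level_eq_zero_iff g x).mp h0)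
  omega

lemma uniqueMaxTree_of (g : V → V) (w : V)
    (h1 : ∀ y, g y ≠ w) (h2 : ∀ x, x ≠ w → ∃ y, g y = x) :
    UniqueMaxTree g := by
  have hwc : ¬ Cyclic g w := by
    rintro ⟨m, hm, hfix⟩
    apply h1 (g^[m-1] w)
    rw [← Function.iterate_succ_apply' g (m-1) w, Nat.succ_eq_add_one,
      Nat.sub_add_cancel hm]
    exact hfix
  have hwlev : 0 < levelOf g w := by
    rcases Nat.eq_zero_or_pos (levelOf g w) with h0 | h0
    · exact absurd ((level_eq_zero_iff g w).mp h0) hwc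
    · exact h0
  have hmax : 0 < maxLevel g := lt_of_lt_of_le hwlev (Finset.le_sup (Finset.mem_univ w))
  refine ⟨hmax, rootOf g w, ?_⟩
  intro x hx
  suffices hxw : x = w by rw [hxw]
  by_contra hxw
  obtain ⟨y, hy⟩ := h2 x hxw
  have hxc : ¬ Cyclic g x := by
    intro hc
    have h0 := (level_eq_zero_iff g x).mpr hc
    omega
  have hyc : ¬ Cyclic g y := fun hc => hxc (hy ▸ cyclic_apply hc)
  have := level_succ hyc
  rw [hy, hx] at this
  have : levelOf g y ≤ maxLevel g := Finset.le_sup (Finset.mem_univ y)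
  omega

end AuxL

/-- a d-periodic graph with a 1-outregular spanning subgraph
consisting solely of disjoint cycles is either a cycle of bunches of length d or
has another 1-outregular spanning subgraph with exactly one maximal tree. -/
theorem stmt16 {V : Type*} [Fintype V] [DecidableEq V] [Nonempty V] {od d : ℕ}
    (E : V → Multiset V)
    (hsc : StronglyConnected E)
    (hout : ∀ v, (E v).card = od)
    (hgcd : CycleGcd E d)
    (f : V → V) (hf : ∀ v, f v ∈ E v) (hperm : Function.Bijective f) :
    (Fintype.card V = d ∧ ∃ σ : V → V, ∀ v, ∀ x ∈ E v, x = σ v) ∨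
    ∃ g : V → V, (∀ v, g v ∈ E v) ∧ UniqueMaxTree g := by
  by_cases hb : ∀ v, ∀ x ∈ E v, x = f v
  · -- bunch case
    left
    refine ⟨?_, f, hb⟩
    obtain ⟨v₀⟩ := ‹Nonempty V›
    -- reaching along f
    have hreach : ∀ p q : V, Relation.ReflTransGen (Adj E) p q → ∃ k, q = f^[k] p := by
      intro p q h
      induction h with
      | refl => exact ⟨0, rfl⟩
      | tail _ ha ih =>
        obtain ⟨k, rfl⟩ := ih
        exact ⟨k + 1, by rw [hb _ _ ha, Function.iterate_succ_apply']⟩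
    -- minimal period of v₀
    have hex : ∃ m, 0 < m ∧ f^[m] v₀ = v₀ := by
      obtain ⟨a, b, hab, h⟩ := Finite.exists_ne_map_eq_of_infinite (fun k : ℕ => f^[k] v₀)
      rcases lt_or_gt_of_ne hab with hlt | hlt
      · refine ⟨b - a, by omega, (hperm.1.iterate a) ?_⟩
        rw [← Function.iterate_add_apply, Nat.add_sub_cancel' hlt.le]; exact h.symm
      · refine ⟨a - b, by omega, (hperm.1.iterate b) ?_⟩
        rw [← Function.iterate_add_apply, Nat.add_sub_cancel' hlt.le]; exact h
    set m := Nat.find hex with hmdef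
    obtain ⟨hm, hfix⟩ : 0 < m ∧ f^[m] v₀ = v₀ := Nat.find_spec hex
    haveI : NeZero m := ⟨hm.ne'⟩
    have hmul : ∀ q, f^[m * q] v₀ = v₀ := by
      intro q
      induction q with
      | zero => simp
      | succ q ih => rw [Nat.mul_succ, Function.iterate_add_apply, hfix, ih]
    have hmod : ∀ k, f^[k % m] v₀ = f^[k] v₀ := by
      intro k
      conv_rhs => rw [← Nat.mod_add_div k m, Function.iterate_add_apply, hmul]
    have hminper : ∀ n, 0 < n → f^[n] v₀ = v₀ → m ∣ n := by
      intro n hn hfn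
      have hr : f^[n % m] v₀ = v₀ := by rw [hmod n]; exact hfn
      rcases Nat.eq_zero_or_pos (n % m) with h0 | h0
      · exact Nat.dvd_of_mod_eq_zero h0
      · exact absurd ⟨h0, hr⟩ (Nat.find_min hex (Nat.mod_lt n hm))
    -- HasCycle E m
    have hcm : HasCycle E m := by
      refine ⟨hm, fun i => f^[i.val] v₀, fun i => ?_⟩
      have h1 : ((i + 1 : ZMod m)).val = (i.val + 1) % m := by
        have : (i + 1 : ZMod m) = ((i.val + 1 : ℕ) : ZMod m) := by
          rw [Nat.cast_add, Nat.cast_one, ZMod.natCast_val, ZMod.cast_id]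
        rw [this, ZMod.val_natCast]
      show f^[(i + 1 : ZMod m).val] v₀ ∈ E (f^[i.val] v₀)
      rw [h1, hmod, Function.iterate_succ_apply']
      exact hf _
    -- all cycle lengths divisible by m
    have hall : ∀ n, HasCycle E n → m ∣ n := by
      rintro n ⟨hn, c, hc⟩
      haveI : NeZero n := ⟨hn.ne'⟩
      have key : ∀ k : ℕ, c (k : ZMod n) = f^[k] (c 0) := by
        intro k
        induction k with
        | zero => simp
        | succ k ih =>
          have h2 : c ((k : ZMod n) + 1) = f (c (k : ZMod n)) := hb _ _ (hc (k : ZMod n))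
          have h3 : ((k + 1 : ℕ) : ZMod n) = (k : ZMod n) + 1 := by push_cast; ring
          rw [h3, h2, ih, Function.iterate_succ_apply']
      have hfix0 : f^[n] (c 0) = c 0 := by
        have := key n
        rw [ZMod.natCast_self] at this
        exact this.symm
      obtain ⟨k, hk⟩ := hreach v₀ (c 0) (hsc v₀ (c 0))
      have : f^[k] (f^[n] v₀) = f^[k] v₀ := by
        rw [← Function.iterate_add_apply, add_comm, Function.iterate_add_apply, ← hk, hfix0, hk]
      exact hminper n hn ((hperm.1.iterate k) this)
    have hdm : d ∣ m := hgcd.1 m hcm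
    have hmd : m ∣ d := hgcd.2 m hall
    have hdm' : d = m := Nat.dvd_antisymm hdm hmd
    -- card V = m
    have hbij : Function.Bijective (fun k : Fin m => f^[(k : ℕ)] v₀) := by
      constructor
      · intro a b hab
        simp only at hab
        have key : ∀ a b : Fin m, (a : ℕ) ≤ (b : ℕ) → f^[(a : ℕ)] v₀ = f^[(b : ℕ)] v₀ → a = b := by
          intro a b hle h
          have : f^[(a : ℕ)] (f^[(b : ℕ) - (a : ℕ)] v₀) = f^[(a : ℕ)] v₀ := by
            rw [← Function.iterate_add_apply, Nat.add_sub_cancel' hle]; exact h.symm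
          have h2 : f^[(b : ℕ) - (a : ℕ)] v₀ = v₀ := (hperm.1.iterate _) this
          rcases Nat.eq_zero_or_pos ((b : ℕ) - (a : ℕ)) with h0 | h0
          · exact Fin.ext (by omega)
          · exact absurd ⟨h0, h2⟩ (Nat.find_min hex (by omega))
        rcases le_total (a : ℕ) (b : ℕ) with h | h
        · exact key a b h hab
        · exact (key b a h hab.symm).symm
      · intro q
        obtain ⟨k, hk⟩ := hreach v₀ q (hsc v₀ q)
        exact ⟨⟨k % m, Nat.mod_lt _ hm⟩, by simp only; rw [hmod k, ← hk]⟩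
    have := Fintype.card_of_bijective hbij
    rw [Fintype.card_fin] at this
    omega
  · -- tree case
    right
    push_neg at hb
    obtain ⟨v, u, hu, hne⟩ := hb
    refine ⟨Function.update f v u, ?_, ?_⟩
    · intro x
      rcases eq_or_ne x v with rfl | h
      · simpa using hu
      · simpa [Function.update_of_ne h] using hf x
    · apply uniqueMaxTree_of _ (f v)
      · intro y
        rcases eq_or_ne y v with rfl | h
        · simpa using hne
        · rw [Function.update_of_ne h]
          exact fun hh => h (hperm.1 hh)
      · intro x hx
        obtain ⟨y, hy⟩ := hperm.2 x
        have hyv : y ≠ v := fun h => hx (by rw [← hy, h])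
        exact ⟨y, by rw [Function.update_of_ne hyv, hy]⟩
end
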